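/- Fix a nonempty finite index set of cardinality n and let M be the algebra of n×n complex matrices with normalized trace τ(A) = Tr(A)/n. For positive definite matrices a, b ∈ M define the relative entropy S(a,b) = τ(a·(log a − log b)), where log is applied via the spectral decomposition. Let ρ, σ, σ' ∈ M be positive definite with σ' ≤ σ (i.e. σ − σ' is positive semidefinite). Then S(ρ, σ) ≤ S(ρ, σ'). -/

import Mathlib

open MeasureTheory Set Filter Topology
open scoped ComplexOrder




/-- Apply a real function to a Hermitian matrix via the spectral decomposition
(junk value `0` for non-Hermitian matrices). -/
noncomputable def matFun {n : Type*} [Fintype n] [DecidableEq n]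
    (f : ℝ → ℝ) (A : Matrix n n ℂ) : Matrix n n ℂ :=
  if hA : A.IsHermitian then hA.cfc f else 0

/-- The relative entropy `S(a,b) = τ(a(log a − log b))` with respect to the
normalized trace `τ = Tr/n`, for positive definite matrices. -/
noncomputable def relEnt {n : Type*} [Fintype n] [DecidableEq n]
    (a b : Matrix n n ℂ) : ℝ :=
  ((a * (matFun Real.log a - matFun Real.log b)).trace).re / (Fintype.card n)

namespace RelEntAux

variable {n : Type*} [Fintype n] [DecidableEq n]

lemma aux_hasDeriv (d : ℝ) (hd : 0 < d) {t : ℝ} (ht : (0:ℝ) ≤ t) :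
    HasDerivAt (fun t : ℝ => Real.log (1+t) - Real.log (d+t)) ((1+t)⁻¹ - (d+t)⁻¹) t := by
  have h1 : (0:ℝ) < 1 + t := by linarith
  have h2 : (0:ℝ) < d + t := by linarith
  have e1 : HasDerivAt (fun t : ℝ => 1 + t) 1 t := (hasDerivAt_id t).const_add 1
  have e2 : HasDerivAt (fun t : ℝ => d + t) 1 t := (hasDerivAt_id t).const_add d
  have l1 := e1.log h1.ne'
  have l2 := e2.log h2.ne'
  have l := l1.sub l2; simp only [one_div, Pi.sub_def] at l; exact l

lemma aux_tendsto (d : ℝ) (hd : 0 < d) :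
    Tendsto (fun t : ℝ => Real.log (1+t) - Real.log (d+t)) atTop (𝓝 0) := by
  have h : Tendsto (fun t : ℝ => (1+t)/(d+t)) atTop (𝓝 1) := by
    have h0 : Tendsto (fun t : ℝ => t⁻¹) atTop (𝓝 (0:ℝ)) := tendsto_inv_atTop_zero
    have hnum : Tendsto (fun t : ℝ => t⁻¹ + 1) atTop (𝓝 (1:ℝ)) := by
      simpa using h0.add tendsto_const_nhds
    have hden : Tendsto (fun t : ℝ => d * t⁻¹ + 1) atTop (𝓝 (1:ℝ)) := by
      simpa using (h0.const_mul d).add tendsto_const_nhds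
    have := hnum.div hden one_ne_zero
    rw [div_one] at this
    apply this.congr'
    filter_upwards [eventually_gt_atTop 0] with t ht
    have h1 : (0:ℝ) < 1 + t := by linarith
    have h2 : (0:ℝ) < d + t := by linarith
    simp only [Pi.div_apply]; field_simp
  have hc : Tendsto (fun t : ℝ => Real.log ((1+t)/(d+t))) atTop (𝓝 0) := by
    have := (Real.continuousAt_log one_ne_zero).tendsto.comp h
    simpa [Function.comp_def] using this
  apply hc.congr'
  filter_upwards [eventually_gt_atTop 0] with t ht
  rw [Real.log_div (by linarith) (by linarith)]

lemma scalar_integrable (d : ℝ) (hd : 0 < d) :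
    IntegrableOn (fun t : ℝ => (1+t)⁻¹ - (d+t)⁻¹) (Ioi 0) := by
  have hcont : ContinuousWithinAt (fun t : ℝ => Real.log (1+t) - Real.log (d+t)) (Ici 0) 0 :=
    (aux_hasDeriv d hd le_rfl).continuousAt.continuousWithinAt
  have hderiv : ∀ x ∈ Ioi (0:ℝ), HasDerivAt (fun t : ℝ => Real.log (1+t) - Real.log (d+t))
      ((1+x)⁻¹ - (d+x)⁻¹) x := fun x hx => aux_hasDeriv d hd (le_of_lt hx)
  rcases le_total 1 d with h | h
  · exact integrableOn_Ioi_deriv_of_nonneg hcont hderiv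
      (fun x hx => by
        have h1 : (0:ℝ) < 1 + x := by have := hx.out; linarith
        have h2 : (0:ℝ) < d + x := by have := hx.out; linarith
        have : (d+x)⁻¹ ≤ (1+x)⁻¹ := by gcongr
        linarith) (aux_tendsto d hd)
  · exact integrableOn_Ioi_deriv_of_nonpos hcont hderiv
      (fun x hx => by
        have h1 : (0:ℝ) < 1 + x := by have := hx.out; linarith
        have h2 : (0:ℝ) < d + x := by have := hx.out; linarith
        have : (1+x)⁻¹ ≤ (d+x)⁻¹ := by gcongr
        linarith) (aux_tendsto d hd)

lemma scalar_integral (d : ℝ) (hd : 0 < d) :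
    ∫ t in Ioi (0:ℝ), ((1+t)⁻¹ - (d+t)⁻¹) = Real.log d := by
  have := integral_Ioi_of_hasDerivAt_of_tendsto
    ((aux_hasDeriv d hd le_rfl).continuousAt.continuousWithinAt)
    (fun x hx => aux_hasDeriv d hd (le_of_lt hx.out))
    (scalar_integrable d hd) (aux_tendsto d hd)
  simpa using this

lemma psd_diag_nonneg {M : Matrix n n ℂ} (hM : M.PosSemidef) (i : n) : 0 ≤ M i i := by
  exact hM.diag_nonneg

lemma psd_trace_re_nonneg {M : Matrix n n ℂ} (hM : M.PosSemidef) : 0 ≤ M.trace.re := by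
  rw [Matrix.trace, Complex.re_sum]
  exact Finset.sum_nonneg fun i _ => (Complex.le_def.mp (psd_diag_nonneg hM i)).1

lemma hermitian_trace_eq_sum_eigenvalues {M : Matrix n n ℂ} (hM : M.IsHermitian) :
    M.trace = ∑ i, (hM.eigenvalues i : ℂ) := by
  have h1 : star (Matrix.IsHermitian.eigenvectorUnitary hM : Matrix n n ℂ) *
      (Matrix.IsHermitian.eigenvectorUnitary hM : Matrix n n ℂ) = 1 :=
    Unitary.star_mul_self_of_mem (SetLike.coe_mem _)
  conv_lhs => rw [hM.spectral_theorem]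
  rw [Unitary.conjStarAlgAut_apply, Matrix.trace_mul_cycle, h1, Matrix.one_mul, Matrix.trace_diagonal]
  rfl

lemma psd_neg_psd_eq_zero {M : Matrix n n ℂ} (hM : M.PosSemidef) (hM' : (-M).PosSemidef) :
    M = 0 := by
  have h1 := psd_trace_re_nonneg hM
  have h2 := psd_trace_re_nonneg hM'
  rw [Matrix.trace_neg] at h2
  simp only [Complex.neg_re, neg_nonneg] at h2
  have htr : M.trace.re = 0 := le_antisymm h2 h1
  have hsum : ∑ i, hM.1.eigenvalues i = 0 := by
    have := hermitian_trace_eq_sum_eigenvalues hM.1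
    have : M.trace.re = ∑ i, hM.1.eigenvalues i := by
      rw [this, Complex.re_sum]; simp
    linarith [this ▸ htr]
  have hz : ∀ i ∈ Finset.univ, hM.1.eigenvalues i = 0 :=
    (Finset.sum_eq_zero_iff_of_nonneg (fun i _ => hM.eigenvalues_nonneg i)).mp hsum
  have : M = (Matrix.IsHermitian.eigenvectorUnitary hM.1 : Matrix n n ℂ) *
      Matrix.diagonal (RCLike.ofReal ∘ hM.1.eigenvalues) *
      (star (Matrix.IsHermitian.eigenvectorUnitary hM.1 : Matrix n n ℂ)) := hM.1.spectral_theorem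
  rw [this]
  have : Matrix.diagonal (RCLike.ofReal ∘ hM.1.eigenvalues) = (0 : Matrix n n ℂ) := by
    ext i j
    by_cases h : i = j
    · subst h; simp [Matrix.diagonal_apply_eq, hz i (Finset.mem_univ i)]
    · simp [Matrix.diagonal_apply_ne _ h]
  rw [this, Matrix.mul_zero, Matrix.zero_mul]

section PsdAux

open scoped MatrixOrder

lemma psd_exists_mul_self {A : Matrix n n ℂ} (hA : A.PosSemidef) :
    ∃ B : Matrix n n ℂ, A = B.conjTranspose * B := by
  obtain ⟨X, hX, -, hXX⟩ := CFC.exists_sqrt_of_isSelfAdjoint_of_quasispectrumRestricts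
    hA.isHermitian (QuasispectrumRestricts.nnreal_of_nonneg hA.nonneg)
  refine ⟨X, ?_⟩
  rw [← Matrix.star_eq_conjTranspose, hX.star_eq]
  exact hXX.symm

end PsdAux

section OrderSection

open scoped Matrix.Norms.L2Operator

variable (n) in
noncomputable def loewner : PartialOrder (Matrix n n ℂ) where
  le a b := (b - a).PosSemidef
  le_refl a := by simpa using (Matrix.PosSemidef.zero (n := n) (R := ℂ))
  le_trans a b c hab hbc := by
    have := hbc.add hab
    simpa using this
  le_antisymm a b hab hba := by
    have key : b - a = 0 := psd_neg_psd_eq_zero hab (by simpa using hba)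
    have := sub_eq_zero.mp key
    exact this.symm

attribute [local instance] loewner

lemma le_iff_psd {a b : Matrix n n ℂ} : a ≤ b ↔ (b - a).PosSemidef := Iff.rfl

lemma nonneg_iff_psd {a : Matrix n n ℂ} : 0 ≤ a ↔ a.PosSemidef := by
  rw [le_iff_psd, sub_zero]

noncomputable local instance : StarOrderedRing (Matrix n n ℂ) := by
  apply StarOrderedRing.of_le_iff
  intro a b
  rw [le_iff_psd]
  constructor
  · intro h
    obtain ⟨B, hB⟩ := psd_exists_mul_self h
    exact ⟨B, by rw [← Matrix.star_eq_conjTranspose] at hB; rw [← hB]; abel⟩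
  · rintro ⟨s, rfl⟩
    have : a + star s * s - a = star s * s := by abel
    rw [this, Matrix.star_eq_conjTranspose]
    exact Matrix.posSemidef_conjTranspose_mul_self s

noncomputable local instance : CStarAlgebra (Matrix n n ℂ) :=
  { (inferInstance : NormedRing (Matrix n n ℂ)),
    (inferInstance : StarRing (Matrix n n ℂ)),
    (inferInstance : CStarRing (Matrix n n ℂ)),
    (inferInstance : NormedAlgebra ℂ (Matrix n n ℂ)),
    (inferInstance : StarModule ℂ (Matrix n n ℂ)),
    (inferInstance : CompleteSpace (Matrix n n ℂ)) with }

lemma inv_sub_inv_psd {σ σ' : Matrix n n ℂ} (hσ : σ.PosDef) (hσ' : σ'.PosDef)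
    (hle : (σ - σ').PosSemidef) : (σ'⁻¹ - σ⁻¹).PosSemidef := by
  have hu : IsUnit σ := (Matrix.isUnit_iff_isUnit_det σ).mpr hσ.det_pos.ne'.isUnit
  have hu' : IsUnit σ' := (Matrix.isUnit_iff_isUnit_det σ').mpr hσ'.det_pos.ne'.isUnit
  rw [← le_iff_psd]
  have key := CStarAlgebra.inv_le_inv (a := hu'.unit) (b := hu.unit)
    (nonneg_iff_psd.mpr hσ'.posSemidef)
    (by rw [le_iff_psd]; simpa using hle)
  simpa [Matrix.coe_units_inv, IsUnit.unit_spec] using key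

end OrderSection

lemma trace_mul_diagonal (M : Matrix n n ℂ) (d : n → ℂ) :
    (M * Matrix.diagonal d).trace = ∑ i, M i i * d i := by
  simp [Matrix.trace, Matrix.diag, Matrix.mul_diagonal]

lemma trace_mul_cfc (ρ : Matrix n n ℂ) {A : Matrix n n ℂ} (hA : A.IsHermitian) (f : ℝ → ℝ) :
    (ρ * hA.cfc f).trace.re = ∑ i,
      ((star (hA.eigenvectorUnitary : Matrix n n ℂ) * ρ *
        (hA.eigenvectorUnitary : Matrix n n ℂ)) i i).re * f (hA.eigenvalues i) := by
  rw [Matrix.IsHermitian.cfc, Unitary.conjStarAlgAut_apply]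
  rw [show ρ * ((hA.eigenvectorUnitary : Matrix n n ℂ) *
      Matrix.diagonal (RCLike.ofReal ∘ f ∘ hA.eigenvalues) *
      star (hA.eigenvectorUnitary : Matrix n n ℂ)) =
    (ρ * (hA.eigenvectorUnitary : Matrix n n ℂ)) *
      Matrix.diagonal (RCLike.ofReal ∘ f ∘ hA.eigenvalues) *
      star (hA.eigenvectorUnitary : Matrix n n ℂ) by simp [Matrix.mul_assoc]]
  rw [Matrix.trace_mul_cycle, trace_mul_diagonal, Complex.re_sum]
  refine Finset.sum_congr rfl fun i _ => ?_
  simp [Complex.mul_re, Matrix.mul_assoc]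

lemma sum_conj_diag_re (ρ : Matrix n n ℂ) {A : Matrix n n ℂ} (hA : A.IsHermitian) :
    ∑ i, ((star (hA.eigenvectorUnitary : Matrix n n ℂ) * ρ *
        (hA.eigenvectorUnitary : Matrix n n ℂ)) i i).re = ρ.trace.re := by
  have h1 : (hA.eigenvectorUnitary : Matrix n n ℂ) *
      star (hA.eigenvectorUnitary : Matrix n n ℂ) = 1 :=
    Unitary.mul_star_self_of_mem (SetLike.coe_mem _)
  have h2 : (star (hA.eigenvectorUnitary : Matrix n n ℂ) * ρ *
      (hA.eigenvectorUnitary : Matrix n n ℂ)).trace = ρ.trace := by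
    rw [Matrix.trace_mul_cycle, h1, Matrix.one_mul]
  rw [← Complex.re_sum]
  rw [show ∑ i, (star (hA.eigenvectorUnitary : Matrix n n ℂ) * ρ *
      (hA.eigenvectorUnitary : Matrix n n ℂ)) i i = (star (hA.eigenvectorUnitary : Matrix n n ℂ)
      * ρ * (hA.eigenvectorUnitary : Matrix n n ℂ)).trace from rfl, h2]

lemma posDef_add_smul {σ : Matrix n n ℂ} (hσ : σ.PosDef) {t : ℝ} (ht : 0 ≤ t) :
    (σ + (t : ℂ) • (1 : Matrix n n ℂ)).PosDef := by
  refine hσ.add_posSemidef ?_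
  rw [Matrix.smul_one_eq_diagonal]
  exact Matrix.PosSemidef.diagonal (fun i => by simpa using Complex.zero_le_real.mpr ht)

lemma spectrum_pos {σ : Matrix n n ℂ} (hσ : σ.PosDef) : ∀ x ∈ spectrum ℝ σ, 0 < x := by
  rw [hσ.1.spectrum_real_eq_range_eigenvalues]
  rintro x ⟨i, rfl⟩
  exact hσ.eigenvalues_pos i

lemma cfc_resolvent {σ : Matrix n n ℂ} (hσ : σ.PosDef) {t : ℝ} (ht : 0 ≤ t) :
    hσ.1.cfc (fun x => (x + t)⁻¹) = (σ + (t : ℂ) • (1 : Matrix n n ℂ))⁻¹ := by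
  have hsa : IsSelfAdjoint σ := hσ.1
  have hspec := spectrum_pos hσ
  have hcont : ContinuousOn (fun x : ℝ => (x + t)⁻¹) (spectrum ℝ σ) :=
    ((continuous_id.add continuous_const).continuousOn).inv₀
      (fun x hx => by have := hspec x hx; exact ne_of_gt (show (0:ℝ) < x + t by linarith))
  have h1 : cfc (fun x : ℝ => x + t) σ = σ + (t : ℂ) • 1 := by
    rw [cfc_add_const t (fun x => x) σ (continuous_id.continuousOn) hsa, cfc_id' ℝ σ]
    congr 1
    rw [IsScalarTower.algebraMap_apply ℝ ℂ (Matrix n n ℂ), Algebra.algebraMap_eq_smul_one]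
    norm_num
  have hmul : hσ.1.cfc (fun x => (x + t)⁻¹) * (σ + (t : ℂ) • 1) = 1 := by
    rw [← Matrix.IsHermitian.cfc_eq, ← h1,
      ← cfc_mul (fun x : ℝ => (x + t)⁻¹) (fun x : ℝ => x + t) σ hcont ((continuous_id.add continuous_const).continuousOn)]
    rw [cfc_congr (g := fun _ => (1 : ℝ)) (fun x hx => by
      have := hspec x hx
      field_simp)]
    rw [cfc_const 1 σ hsa, map_one]
  exact (Matrix.inv_eq_left_inv hmul).symm

lemma trace_mul_psd_re_nonneg {ρ X : Matrix n n ℂ} (hρ : ρ.PosSemidef) (hX : X.PosSemidef) :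
    0 ≤ (ρ * X).trace.re := by
  obtain ⟨B, hB⟩ := psd_exists_mul_self hρ
  have h1 : (ρ * X).trace = (B * X * B.conjTranspose).trace := by
    rw [hB]
    exact (Matrix.trace_mul_cycle B X B.conjTranspose).symm
  rw [h1]
  have h2 : (B * X * B.conjTranspose).PosSemidef := hX.mul_mul_conjTranspose_same B
  rw [Matrix.trace, Complex.re_sum]
  refine Finset.sum_nonneg fun i _ => ?_
  have := h2.diag_nonneg (i := i)
  have h3 : 0 ≤ (B * X * B.conjTranspose) i i := by
    exact this
  exact (Complex.le_def.mp h3).1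

lemma key {ρ σ σ' : Matrix n n ℂ} (hρ : ρ.PosDef) (hσ : σ.PosDef) (hσ' : σ'.PosDef)
    (hle : (σ - σ').PosSemidef) :
    (ρ * matFun Real.log σ').trace.re ≤ (ρ * matFun Real.log σ).trace.re := by
  classical
  set c : n → ℝ := fun i => ((star (hσ.1.eigenvectorUnitary : Matrix n n ℂ) * ρ *
    (hσ.1.eigenvectorUnitary : Matrix n n ℂ)) i i).re with hc
  set c' : n → ℝ := fun i => ((star (hσ'.1.eigenvectorUnitary : Matrix n n ℂ) * ρ *
    (hσ'.1.eigenvectorUnitary : Matrix n n ℂ)) i i).re with hc'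
  set lam : n → ℝ := hσ.1.eigenvalues with hlam
  set lam' : n → ℝ := hσ'.1.eigenvalues with hlam'
  set F : ℝ → ℝ := fun t => ∑ i, c i * ((1+t)⁻¹ - (lam i + t)⁻¹) with hF
  set F' : ℝ → ℝ := fun t => ∑ i, c' i * ((1+t)⁻¹ - (lam' i + t)⁻¹) with hF'
  have hFint : IntegrableOn F (Ioi 0) :=
    integrable_finset_sum _ (fun i _ =>
      ((scalar_integrable (lam i) (hσ.eigenvalues_pos i)).const_mul (c i)))
  have hF'int : IntegrableOn F' (Ioi 0) :=
    integrable_finset_sum _ (fun i _ =>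
      ((scalar_integrable (lam' i) (hσ'.eigenvalues_pos i)).const_mul (c' i)))
  have hFval : ∫ t in Ioi (0:ℝ), F t = ∑ i, c i * Real.log (lam i) := by
    rw [integral_finset_sum _ (fun i _ =>
      ((scalar_integrable (lam i) (hσ.eigenvalues_pos i)).const_mul (c i)))]
    refine Finset.sum_congr rfl fun i _ => ?_
    rw [MeasureTheory.integral_const_mul, scalar_integral (lam i) (hσ.eigenvalues_pos i)]
  have hF'val : ∫ t in Ioi (0:ℝ), F' t = ∑ i, c' i * Real.log (lam' i) := by
    rw [integral_finset_sum _ (fun i _ =>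
      ((scalar_integrable (lam' i) (hσ'.eigenvalues_pos i)).const_mul (c' i)))]
    refine Finset.sum_congr rfl fun i _ => ?_
    rw [MeasureTheory.integral_const_mul, scalar_integral (lam' i) (hσ'.eigenvalues_pos i)]
  have hlog : (ρ * matFun Real.log σ).trace.re = ∑ i, c i * Real.log (lam i) := by
    rw [matFun, dif_pos hσ.1]
    exact trace_mul_cfc ρ hσ.1 Real.log
  have hlog' : (ρ * matFun Real.log σ').trace.re = ∑ i, c' i * Real.log (lam' i) := by
    rw [matFun, dif_pos hσ'.1]
    exact trace_mul_cfc ρ hσ'.1 Real.log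
  have hpt : ∀ t ∈ Ioi (0:ℝ), F' t ≤ F t := by
    intro t ht
    have ht' : (0:ℝ) ≤ t := le_of_lt ht
    have h1 : F t = ρ.trace.re * (1+t)⁻¹ - (ρ * (σ + (t:ℂ) • 1)⁻¹).trace.re := by
      have e1 : ∑ i, c i * (lam i + t)⁻¹ = (ρ * (σ + (t:ℂ) • 1)⁻¹).trace.re := by
        rw [← cfc_resolvent hσ ht']
        exact (trace_mul_cfc ρ hσ.1 (fun x => (x+t)⁻¹)).symm
      rw [hF, ← e1, ← sum_conj_diag_re ρ hσ.1, ← hc]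
      rw [Finset.sum_mul, ← Finset.sum_sub_distrib]
      exact Finset.sum_congr rfl fun i _ => by ring
    have h2 : F' t = ρ.trace.re * (1+t)⁻¹ - (ρ * (σ' + (t:ℂ) • 1)⁻¹).trace.re := by
      have e1 : ∑ i, c' i * (lam' i + t)⁻¹ = (ρ * (σ' + (t:ℂ) • 1)⁻¹).trace.re := by
        rw [← cfc_resolvent hσ' ht']
        exact (trace_mul_cfc ρ hσ'.1 (fun x => (x+t)⁻¹)).symm
      rw [hF', ← e1, ← sum_conj_diag_re ρ hσ'.1, ← hc']
      rw [Finset.sum_mul, ← Finset.sum_sub_distrib]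
      exact Finset.sum_congr rfl fun i _ => by ring
    rw [h1, h2]
    have hd : ((σ' + (t:ℂ) • 1)⁻¹ - (σ + (t:ℂ) • 1)⁻¹).PosSemidef := by
      refine inv_sub_inv_psd (posDef_add_smul hσ ht') (posDef_add_smul hσ' ht') ?_
      rw [show (σ + (t:ℂ) • 1) - (σ' + (t:ℂ) • 1) = σ - σ' by abel]
      exact hle
    have hnn := trace_mul_psd_re_nonneg hρ.posSemidef hd
    rw [Matrix.mul_sub, Matrix.trace_sub, Complex.sub_re] at hnn
    linarith
  have hsub : (ρ * matFun Real.log σ).trace.re - (ρ * matFun Real.log σ').trace.re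
      = ∫ t in Ioi (0:ℝ), (F t - F' t) := by
    rw [hlog, hlog', ← hFval, ← hF'val, ← integral_sub hFint hF'int]
  have hnn : 0 ≤ ∫ t in Ioi (0:ℝ), (F t - F' t) :=
    setIntegral_nonneg measurableSet_Ioi (fun t ht => sub_nonneg.mpr (hpt t ht))
  linarith [hsub ▸ hnn]

end RelEntAux

/-- Monotonicity of relative entropy in the second variable (inequality (2.7)):
if `σ' ≤ σ` then `S(ρ, σ) ≤ S(ρ, σ')`. -/
theorem relEnt_antitone_right {n : Type*} [Fintype n] [DecidableEq n] [Nonempty n]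
    (ρ σ σ' : Matrix n n ℂ) (hρ : ρ.PosDef) (hσ : σ.PosDef) (hσ' : σ'.PosDef)
    (hle : (σ - σ').PosSemidef) :
    relEnt ρ σ ≤ relEnt ρ σ' := by
  have key' := RelEntAux.key hρ hσ hσ' hle
  have hsplit : ∀ b : Matrix n n ℂ,
      (ρ * (matFun Real.log ρ - matFun Real.log b)).trace.re
        = (ρ * matFun Real.log ρ).trace.re - (ρ * matFun Real.log b).trace.re := fun b => by
    rw [Matrix.mul_sub, Matrix.trace_sub, Complex.sub_re]
  rw [relEnt, relEnt, hsplit σ, hsplit σ']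
  have hcard : (0:ℝ) ≤ (Fintype.card n : ℝ) := by positivity
  gcongr
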